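/- Let n ≥ 2 and D_i = 2^{i-1} · i!. The map d_n : D_n → {0, 1, ..., 2^{n-1}·n! − 1} defined by d_n(π) = Σ_{i=1}^{n−1} inv_i(π) · D_{n−i} is a bijection. -/

import Mathlib

/-- A signed permutation `π` of `[n]`: `π(i) = ε i · σ(i)` with `σ` a permutation
of `[n]` and signs `ε i ∈ {±1}`.  Positions are encoded by `Fin n`
(position `i ∈ [n]` corresponds to `⟨i-1, _⟩ : Fin n`). -/
structure SignedPerm (n : ℕ) where
  σ : Equiv.Perm (Fin n)
  ε : Fin n → ℤ
  hε : ∀ i, ε i = 1 ∨ ε i = -1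

namespace SignedPerm

variable {n : ℕ}

/-- The signed value `π(i) = ε i · σ(i) ∈ {-n, …, -1, 1, …, n}` (1-based value). -/
def val (π : SignedPerm n) (i : Fin n) : ℤ :=
  π.ε i * ((π.σ i : ℕ) + 1)

/-- The standard basis vector `e i` of `ℝ^n`. -/
def e (i : Fin n) : Fin n → ℝ := Pi.single i 1

/-- The action of a signed permutation on `ℝ^n`, determined by
`π · e i = ε i · e (σ i)`. -/
def act (π : SignedPerm n) (v : Fin n → ℝ) : Fin n → ℝ :=
  fun j => (π.ε (π.σ.symm j) : ℝ) * v (π.σ.symm j)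

/-- The positive root system `Φₙ⁺ = {e k, e i + e j, e i - e j : k, i < j}` of `Bₙ`. -/
def PhiPos (n : ℕ) : Set (Fin n → ℝ) :=
  {v | (∃ k : Fin n, v = e k) ∨ ∃ i j : Fin n, i < j ∧ (v = e i + e j ∨ v = e i - e j)}

/-- The positive roots `Φₙ,ᵢ⁺ = {e i, e i + e j, e i - e j : i < j ≤ n}`. -/
def PhiPosI (n : ℕ) (i : Fin n) : Set (Fin n → ℝ) :=
  {v | v = e i ∨ ∃ j : Fin n, i < j ∧ (v = e i + e j ∨ v = e i - e j)}

/-- The `i`-inversion number `invᵢ π = #{v ∈ Φₙ,ᵢ⁺ : π · v ∈ -Φₙ⁺}`. -/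
noncomputable def invi (i : Fin n) (π : SignedPerm n) : ℕ :=
  Set.ncard {v | v ∈ PhiPosI n i ∧ -(π.act v) ∈ PhiPos n}

/-- The inversion number `inv π = #{v ∈ Φₙ⁺ : π · v ∈ -Φₙ⁺}`. -/
noncomputable def inv (π : SignedPerm n) : ℕ :=
  Set.ncard {v | v ∈ PhiPos n ∧ -(π.act v) ∈ PhiPos n}

end SignedPerm


namespace SignedPerm

variable {n : ℕ}

lemma e_apply (i x : Fin n) : e i x = if x = i then 1 else 0 := Pi.single_apply i 1 x

lemma pair_ne_single {a b k : Fin n} (hab : a ≠ b) {s t u : ℝ} (hs : s ≠ 0) (ht : t ≠ 0) :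
    s • e a + t • e b ≠ u • e k := by
  intro h
  by_cases hka : k = a
  · subst hka
    have hb := congrFun h b
    simp [e_apply, Ne.symm hab] at hb
    exact ht hb
  · have ha := congrFun h a
    simp [e_apply, hab, Ne.symm hka] at ha
    exact hs ha

lemma pair_eq_pair_iff {a b i j : Fin n} (hab : a ≠ b) (hij : i ≠ j) {s t u w : ℝ}
    (hs : s ≠ 0) (ht : t ≠ 0) :
    s • e a + t • e b = u • e i + w • e j ↔
      (a = i ∧ s = u ∧ b = j ∧ t = w) ∨ (a = j ∧ s = w ∧ b = i ∧ t = u) := by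
  constructor
  · intro h
    have ha := congrFun h a
    have hb := congrFun h b
    simp only [Pi.add_apply, Pi.smul_apply, smul_eq_mul, e_apply] at ha hb
    rw [if_neg hab] at ha
    rw [if_neg (Ne.symm hab)] at hb
    simp only [if_true] at ha hb
    by_cases hia : a = i
    · rw [if_pos hia, if_neg (fun hja : a = j => hij (hia ▸ hja ▸ rfl))] at ha
      rw [if_neg (fun hbi : b = i => hab (hia ▸ hbi ▸ rfl))] at hb
      by_cases hjb : b = j
      · rw [if_pos hjb] at hb
        simp only [mul_one, mul_zero, add_zero, zero_add] at ha hb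
        exact Or.inl ⟨hia, ha, hjb, hb⟩
      · rw [if_neg hjb] at hb
        simp only [mul_one, mul_zero, add_zero, zero_add] at hb
        exact absurd hb ht
    · rw [if_neg hia] at ha
      by_cases hja : a = j
      · rw [if_pos hja] at ha
        rw [if_neg (fun hbj : b = j => hab (hja ▸ hbj ▸ rfl))] at hb
        by_cases hib : b = i
        · rw [if_pos hib] at hb
          simp only [mul_one, mul_zero, add_zero, zero_add] at ha hb
          exact Or.inr ⟨hja, ha, hib, hb⟩
        · rw [if_neg hib] at hb
          simp only [mul_one, mul_zero, add_zero, zero_add] at hb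
          exact absurd hb ht
      · rw [if_neg hja] at ha
        simp only [mul_one, mul_zero, add_zero, zero_add] at ha
        exact absurd ha hs
  · rintro (⟨rfl, rfl, rfl, rfl⟩ | ⟨rfl, rfl, rfl, rfl⟩)
    · rfl
    · funext x; simp only [Pi.add_apply, Pi.smul_apply, smul_eq_mul]; ring

lemma smul_e_mem_iff {a : Fin n} {s : ℤ} (hs : s = 1 ∨ s = -1) :
    (s : ℝ) • e a ∈ PhiPos n ↔ s = 1 := by
  have hs0 : (s : ℝ) ≠ 0 := by rcases hs with rfl | rfl <;> norm_num
  constructor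
  · rintro (⟨k, hk⟩ | ⟨i, j, hij, (h | h)⟩)
    · have h2 := congrFun hk k
      simp only [Pi.smul_apply, smul_eq_mul, e_apply, if_pos rfl, mul_one] at h2
      by_cases hka : k = a
      · rw [if_pos hka, mul_one] at h2; exact_mod_cast h2
      · rw [if_neg hka, mul_zero] at h2; exact absurd h2.symm one_ne_zero
    · exact absurd h.symm (by
        rw [show e i + e j = (1:ℝ) • e i + (1:ℝ) • e j by simp]
        exact pair_ne_single (ne_of_lt hij) one_ne_zero one_ne_zero)
    · exact absurd h.symm (by
        rw [show e i - e j = (1:ℝ) • e i + (-1:ℝ) • e j by simp [sub_eq_add_neg]]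
        exact pair_ne_single (ne_of_lt hij) one_ne_zero (by norm_num))
  · rintro rfl
    exact Or.inl ⟨a, by simp⟩

lemma pair_mem_iff {a b : Fin n} (hab : a ≠ b) {s t : ℤ}
    (hs : s = 1 ∨ s = -1) (ht : t = 1 ∨ t = -1) :
    (s : ℝ) • e a + (t : ℝ) • e b ∈ PhiPos n ↔
      (s = 1 ∧ t = 1) ∨ (s = 1 ∧ t = -1 ∧ a < b) ∨ (s = -1 ∧ t = 1 ∧ b < a) := by
  have hs0 : (s : ℝ) ≠ 0 := by rcases hs with rfl | rfl <;> norm_num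
  have ht0 : (t : ℝ) ≠ 0 := by rcases ht with rfl | rfl <;> norm_num
  constructor
  · rintro (⟨k, hk⟩ | ⟨i, j, hij, (h | h)⟩)
    · exact absurd hk (by
        rw [show e k = (1:ℝ) • e k by simp]
        exact pair_ne_single hab hs0 ht0)
    · rw [show e i + e j = (1:ℝ) • e i + (1:ℝ) • e j by simp] at h
      rw [pair_eq_pair_iff hab (ne_of_lt hij) hs0 ht0] at h
      rcases h with ⟨rfl, h1, rfl, h2⟩ | ⟨rfl, h1, rfl, h2⟩ <;>
        exact Or.inl ⟨by exact_mod_cast h1, by exact_mod_cast h2⟩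
    · rw [show e i - e j = (1:ℝ) • e i + (-1:ℝ) • e j by simp [sub_eq_add_neg]] at h
      rw [pair_eq_pair_iff hab (ne_of_lt hij) hs0 ht0] at h
      rcases h with ⟨rfl, h1, rfl, h2⟩ | ⟨rfl, h1, rfl, h2⟩
      · exact Or.inr (Or.inl ⟨by exact_mod_cast h1, by exact_mod_cast h2, hij⟩)
      · exact Or.inr (Or.inr ⟨by exact_mod_cast h1, by exact_mod_cast h2, hij⟩)
  · rintro (⟨rfl, rfl⟩ | ⟨rfl, rfl, hlt⟩ | ⟨rfl, rfl, hlt⟩)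
    · rcases hab.lt_or_gt with hlt | hlt
      · exact Or.inr ⟨a, b, hlt, Or.inl (by push_cast; simp)⟩
      · exact Or.inr ⟨b, a, hlt, Or.inl (by push_cast; simp [add_comm])⟩
    · exact Or.inr ⟨a, b, hlt, Or.inr (by push_cast; simp [sub_eq_add_neg])⟩
    · refine Or.inr ⟨b, a, hlt, Or.inr ?_⟩
      funext x
      push_cast
      simp only [Pi.add_apply, Pi.smul_apply, Pi.sub_apply, smul_eq_mul]
      ring

/-- the Lehmer code entry -/
def Ai (π : SignedPerm n) (i : Fin n) : ℕ :=
  (Finset.univ.filter fun j => i < j ∧ π.σ j < π.σ i).card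

lemma neg_act_pair (π : SignedPerm n) {i j : Fin n} (hij : i ≠ j) (c d : ℤ) :
    -(π.act ((c:ℝ) • e i + (d:ℝ) • e j)) =
      ((-(c * π.ε i) : ℤ) : ℝ) • e (π.σ i) + ((-(d * π.ε j) : ℤ) : ℝ) • e (π.σ j) := by
  funext x
  simp only [act, Pi.neg_apply, Pi.add_apply, Pi.smul_apply, smul_eq_mul, e_apply,
    Int.cast_neg, Int.cast_mul]
  by_cases h1 : x = π.σ i
  · have e1 : π.σ.symm x = i := by rw [h1]; simp
    have h2 : x ≠ π.σ j := by rw [h1]; exact fun h => hij (π.σ.injective h)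
    rw [e1, if_pos rfl, if_neg hij, if_pos h1, if_neg h2]; ring
  · by_cases h2 : x = π.σ j
    · have e2 : π.σ.symm x = j := by rw [h2]; simp
      rw [e2, if_pos rfl, if_neg (Ne.symm hij), if_neg h1, if_pos h2]; ring
    · have e1 : π.σ.symm x ≠ i := fun h => h1 (by rw [← h]; simp)
      have e2 : π.σ.symm x ≠ j := fun h => h2 (by rw [← h]; simp)
      rw [if_neg e1, if_neg e2, if_neg h1, if_neg h2]; ring

lemma neg_act_single (π : SignedPerm n) (i : Fin n) :
    -(π.act (e i)) = ((-π.ε i : ℤ) : ℝ) • e (π.σ i) := by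
  funext x
  simp only [act, Pi.neg_apply, Pi.smul_apply, smul_eq_mul, e_apply, Int.cast_neg]
  by_cases h1 : x = π.σ i
  · have e1 : π.σ.symm x = i := by rw [h1]; simp
    rw [e1, if_pos rfl, if_pos h1]; ring
  · have e1 : π.σ.symm x ≠ i := fun h => h1 (by rw [← h]; simp)
    rw [if_neg e1, if_neg h1]; ring

lemma P_single (π : SignedPerm n) (i : Fin n) :
    -(π.act (e i)) ∈ PhiPos n ↔ π.ε i = -1 := by
  rw [neg_act_single, smul_e_mem_iff (by rcases π.hε i with h | h <;> simp [h])]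
  omega

lemma P_plus (π : SignedPerm n) {i j : Fin n} (hij : i ≠ j) :
    -(π.act (e i + e j)) ∈ PhiPos n ↔
      (π.ε i = -1 ∧ π.ε j = -1) ∨ (π.ε i = -1 ∧ π.ε j = 1 ∧ π.σ i < π.σ j) ∨
        (π.ε i = 1 ∧ π.ε j = -1 ∧ π.σ j < π.σ i) := by
  have h0 : e i + e j = ((1:ℤ):ℝ) • e i + ((1:ℤ):ℝ) • e j := by push_cast; simp
  rw [h0, neg_act_pair π hij 1 1,
    pair_mem_iff (π.σ.injective.ne hij)
      (by rcases π.hε i with h | h <;> simp [h])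
      (by rcases π.hε j with h | h <;> simp [h])]
  rcases π.hε i with h1 | h1 <;> rcases π.hε j with h2 | h2 <;>
    simp [h1, h2] <;> tauto

lemma P_minus (π : SignedPerm n) {i j : Fin n} (hij : i ≠ j) :
    -(π.act (e i - e j)) ∈ PhiPos n ↔
      (π.ε i = -1 ∧ π.ε j = 1) ∨ (π.ε i = -1 ∧ π.ε j = -1 ∧ π.σ i < π.σ j) ∨
        (π.ε i = 1 ∧ π.ε j = 1 ∧ π.σ j < π.σ i) := by
  have h0 : e i - e j = ((1:ℤ):ℝ) • e i + ((-1:ℤ):ℝ) • e j := by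
    push_cast; simp [sub_eq_add_neg]
  rw [h0, neg_act_pair π hij 1 (-1),
    pair_mem_iff (π.σ.injective.ne hij)
      (by rcases π.hε i with h | h <;> simp [h])
      (by rcases π.hε j with h | h <;> simp [h])]
  rcases π.hε i with h1 | h1 <;> rcases π.hε j with h2 | h2 <;>
    simp [h1, h2] <;> tauto

lemma eplus_ne_eminus {i j j' : Fin n} (hj : i ≠ j') :
    e i + e j ≠ e i - e j' := by
  intro h
  have := congrFun h j'
  simp only [Pi.add_apply, Pi.sub_apply, e_apply, if_pos rfl] at this
  rw [if_neg (Ne.symm hj)] at this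
  by_cases hjj : j' = j <;> simp [hjj] at this <;> norm_num at this

lemma e_ne_eplus {i j : Fin n} (hj : i ≠ j) : e i ≠ e i + e j := by
  intro h
  have := congrFun h j
  simp only [Pi.add_apply, e_apply, if_pos rfl] at this
  rw [if_neg (Ne.symm hj)] at this
  norm_num at this

lemma e_ne_eminus {i j : Fin n} (hj : i ≠ j) : e i ≠ e i - e j := by
  intro h
  have := congrFun h j
  simp only [Pi.sub_apply, e_apply, if_pos rfl] at this
  rw [if_neg (Ne.symm hj)] at this
  norm_num at this

lemma eplus_inj {i : Fin n} : ∀ j j' : Fin n, e i + e j = e i + e j' → j = j' := by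
  intro j j' h
  have h2 : e j = e j' := add_left_cancel h
  have := congrFun h2 j
  simp only [e_apply, if_pos rfl] at this
  by_cases hjj : j = j'
  · exact hjj
  · rw [if_neg hjj] at this; norm_num at this

lemma eminus_inj {i : Fin n} : ∀ j j' : Fin n, e i - e j = e i - e j' → j = j' := by
  intro j j' h
  by_cases hjj : j = j'
  · exact hjj
  · have := congrFun h j
    simp only [Pi.sub_apply, e_apply, if_pos rfl] at this
    rw [if_neg hjj] at this
    simp only [if_true] at this
    linarith

lemma card_filter_add_card_filter {α : Type*} [Fintype α] [DecidableEq α] (p q r : α → Prop)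
    [DecidablePred p] [DecidablePred q] [DecidablePred r]
    (h1 : ∀ j, r j ↔ p j ∨ q j) (h2 : ∀ j, ¬(p j ∧ q j)) :
    (Finset.univ.filter p).card + (Finset.univ.filter q).card =
      (Finset.univ.filter r).card := by
  rw [← Finset.card_union_of_disjoint]
  · congr 1; ext x; simp only [Finset.mem_union, Finset.mem_filter, Finset.mem_univ,
      true_and, h1 x]
  · rw [Finset.disjoint_filter]
    intro x _ hp hq
    exact h2 x ⟨hp, hq⟩

lemma card_filter_gt (i : Fin n) :
    (Finset.univ.filter fun j => i < j).card = n - 1 - i.val := by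
  rw [show Finset.univ.filter (fun j => i < j) = Finset.Ioi i from by ext x; simp]
  exact Fin.card_Ioi i

lemma Ai_le (π : SignedPerm n) (i : Fin n) : Ai π i ≤ n - 1 - i.val := by
  rw [← card_filter_gt i]
  exact Finset.card_le_card (fun j hj => by
    simp only [Finset.mem_filter] at hj ⊢; exact ⟨hj.1, hj.2.1⟩)

lemma Ai_compl (π : SignedPerm n) (i : Fin n) :
    Ai π i + (Finset.univ.filter fun j => i < j ∧ π.σ i < π.σ j).card = n - 1 - i.val := by
  rw [← card_filter_gt i]
  exact card_filter_add_card_filter _ _ _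
    (fun j => by
      constructor
      · intro hj
        rcases lt_trichotomy (π.σ j) (π.σ i) with h | h | h
        · exact Or.inl ⟨hj, h⟩
        · exact absurd (π.σ.injective h) (by rintro rfl; exact lt_irrefl _ hj)
        · exact Or.inr ⟨hj, h⟩
      · rintro (⟨h, _⟩ | ⟨h, _⟩) <;> exact h)
    (fun j => by rintro ⟨⟨_, h1⟩, ⟨_, h2⟩⟩; exact lt_asymm h1 h2)

lemma invi_eq (π : SignedPerm n) (i : Fin n) :
    invi i π = if π.ε i = 1 then Ai π i
      else 2 * (n - 1 - i.val) + 1 - Ai π i := by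
  classical
  let Tp : Finset (Fin n → ℝ) :=
    (Finset.univ.filter fun j => i < j ∧ -(π.act (e i + e j)) ∈ PhiPos n).image
      (fun j => e i + e j)
  let Tm : Finset (Fin n → ℝ) :=
    (Finset.univ.filter fun j => i < j ∧ -(π.act (e i - e j)) ∈ PhiPos n).image
      (fun j => e i - e j)
  let T0 : Finset (Fin n → ℝ) := if -(π.act (e i)) ∈ PhiPos n then {e i} else ∅
  have hset : {v | v ∈ PhiPosI n i ∧ -(π.act v) ∈ PhiPos n} = ↑(T0 ∪ Tp ∪ Tm) := by
    ext v
    simp only [Set.mem_setOf_eq, PhiPosI, Finset.coe_union, Set.mem_union,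
      Finset.coe_image, Set.mem_image, Finset.mem_coe, Finset.mem_filter,
      Finset.mem_univ, true_and, T0, Tp, Tm]
    constructor
    · rintro ⟨(rfl | ⟨j, hij, (rfl | rfl)⟩), hPv⟩
      · left; left; simp only [if_pos hPv]; exact Finset.mem_singleton_self _
      · left; right; exact ⟨j, ⟨hij, hPv⟩, rfl⟩
      · right; exact ⟨j, ⟨hij, hPv⟩, rfl⟩
    · rintro ((h0 | ⟨j, ⟨hij, hPj⟩, rfl⟩) | ⟨j, ⟨hij, hPj⟩, rfl⟩)
      · split_ifs at h0 with hc
        · rw [Finset.mem_singleton] at h0; subst h0; exact ⟨Or.inl rfl, hc⟩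
        · exact absurd h0 (Finset.notMem_empty v)
      · exact ⟨Or.inr ⟨j, hij, Or.inl rfl⟩, hPj⟩
      · exact ⟨Or.inr ⟨j, hij, Or.inr rfl⟩, hPj⟩
  have hinv : invi i π = (T0 ∪ Tp ∪ Tm).card := by
    rw [show invi i π =
        Set.ncard {v | v ∈ PhiPosI n i ∧ -(π.act v) ∈ PhiPos n} from rfl,
      hset, Set.ncard_coe_finset]
  have memTp : ∀ v ∈ Tp, ∃ j, i < j ∧ v = e i + e j := by
    intro v hv
    simp only [Tp, Finset.mem_image, Finset.mem_filter, Finset.mem_univ, true_and] at hv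
    obtain ⟨j, ⟨hij, _⟩, rfl⟩ := hv
    exact ⟨j, hij, rfl⟩
  have memTm : ∀ v ∈ Tm, ∃ j, i < j ∧ v = e i - e j := by
    intro v hv
    simp only [Tm, Finset.mem_image, Finset.mem_filter, Finset.mem_univ, true_and] at hv
    obtain ⟨j, ⟨hij, _⟩, rfl⟩ := hv
    exact ⟨j, hij, rfl⟩
  have memT0 : ∀ v ∈ T0, v = e i := by
    intro v hv
    simp only [T0] at hv
    split_ifs at hv with hc
    · exact Finset.mem_singleton.mp hv
    · exact absurd hv (Finset.notMem_empty v)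
  have hd1 : Disjoint T0 Tp := by
    rw [Finset.disjoint_left]
    intro v hv0 hvp
    obtain ⟨j, hij, rfl⟩ := memTp v hvp
    exact e_ne_eplus (ne_of_lt hij) (memT0 _ hv0).symm
  have hd2 : Disjoint (T0 ∪ Tp) Tm := by
    rw [Finset.disjoint_left]
    intro v hv0 hvm
    obtain ⟨j', hij', rfl⟩ := memTm v hvm
    rcases Finset.mem_union.mp hv0 with h | h
    · exact e_ne_eminus (ne_of_lt hij') (memT0 _ h).symm
    · obtain ⟨j, hij, hje⟩ := memTp _ h
      exact eplus_ne_eminus (ne_of_lt hij') hje.symm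
  have hcard : (T0 ∪ Tp ∪ Tm).card = T0.card + Tp.card + Tm.card := by
    rw [Finset.card_union_of_disjoint hd2, Finset.card_union_of_disjoint hd1]
  have hTp : Tp.card =
      (Finset.univ.filter fun j => i < j ∧ -(π.act (e i + e j)) ∈ PhiPos n).card := by
    apply Finset.card_image_of_injOn
    intro x _ y _ h
    exact eplus_inj x y h
  have hTm : Tm.card =
      (Finset.univ.filter fun j => i < j ∧ -(π.act (e i - e j)) ∈ PhiPos n).card := by
    apply Finset.card_image_of_injOn
    intro x _ y _ h
    exact eminus_inj x y h
  have hT0 : T0.card = if π.ε i = -1 then 1 else 0 := by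
    rw [show T0 = if -(π.act (e i)) ∈ PhiPos n then {e i} else ∅ from rfl]
    by_cases hc : π.ε i = -1
    · rw [if_pos ((P_single π i).mpr hc), if_pos hc]; simp
    · rw [if_neg (fun hmem => hc ((P_single π i).mp hmem)), if_neg hc]; simp
  rcases π.hε i with hεi | hεi
  · -- ε i = 1
    rw [if_pos hεi]
    have e1 : (Finset.univ.filter fun j => i < j ∧ -(π.act (e i + e j)) ∈ PhiPos n) =
        Finset.univ.filter fun j => i < j ∧ π.ε j = -1 ∧ π.σ j < π.σ i := by
      apply Finset.filter_congr
      intro j _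
      by_cases hij : i < j
      · simp only [hij, true_and]
        rw [P_plus π (ne_of_lt hij)]
        simp [hεi]
      · simp [hij]
    have e2 : (Finset.univ.filter fun j => i < j ∧ -(π.act (e i - e j)) ∈ PhiPos n) =
        Finset.univ.filter fun j => i < j ∧ π.ε j = 1 ∧ π.σ j < π.σ i := by
      apply Finset.filter_congr
      intro j _
      by_cases hij : i < j
      · simp only [hij, true_and]
        rw [P_minus π (ne_of_lt hij)]
        simp [hεi]
      · simp [hij]
    have hsum : (Finset.univ.filter fun j => i < j ∧ π.ε j = -1 ∧ π.σ j < π.σ i).card +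
        (Finset.univ.filter fun j => i < j ∧ π.ε j = 1 ∧ π.σ j < π.σ i).card = Ai π i := by
      apply card_filter_add_card_filter
      · intro j
        constructor
        · rintro ⟨h1, h2⟩
          rcases π.hε j with h | h
          · exact Or.inr ⟨h1, h, h2⟩
          · exact Or.inl ⟨h1, h, h2⟩
        · rintro (⟨h1, _, h2⟩ | ⟨h1, _, h2⟩) <;> exact ⟨h1, h2⟩
      · rintro j ⟨⟨_, h1, _⟩, ⟨_, h2, _⟩⟩
        omega
    rw [hinv, hcard, hTp, hTm, hT0, e1, e2, if_neg (by omega : ¬ π.ε i = -1)]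
    omega
  · -- ε i = -1
    rw [if_neg (by omega : ¬ π.ε i = 1)]
    have e1 : (Finset.univ.filter fun j => i < j ∧ -(π.act (e i + e j)) ∈ PhiPos n) =
        Finset.univ.filter fun j => i < j ∧
          (π.ε j = -1 ∨ (π.ε j = 1 ∧ π.σ i < π.σ j)) := by
      apply Finset.filter_congr
      intro j _
      by_cases hij : i < j
      · simp only [hij, true_and]
        rw [P_plus π (ne_of_lt hij)]
        simp [hεi]
      · simp [hij]
    have e2 : (Finset.univ.filter fun j => i < j ∧ -(π.act (e i - e j)) ∈ PhiPos n) =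
        Finset.univ.filter fun j => i < j ∧
          (π.ε j = 1 ∨ (π.ε j = -1 ∧ π.σ i < π.σ j)) := by
      apply Finset.filter_congr
      intro j _
      by_cases hij : i < j
      · simp only [hij, true_and]
        rw [P_minus π (ne_of_lt hij)]
        simp [hεi]
      · simp [hij]
    have s1 : (Finset.univ.filter fun j => i < j ∧ π.ε j = -1).card +
        (Finset.univ.filter fun j => i < j ∧ π.ε j = 1 ∧ π.σ i < π.σ j).card =
        (Finset.univ.filter fun j => i < j ∧
          (π.ε j = -1 ∨ (π.ε j = 1 ∧ π.σ i < π.σ j))).card := by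
      apply card_filter_add_card_filter
      · intro j
        constructor
        · rintro ⟨h1, h2 | h2⟩
          · exact Or.inl ⟨h1, h2⟩
          · exact Or.inr ⟨h1, h2⟩
        · rintro (⟨h1, h2⟩ | ⟨h1, h2⟩)
          · exact ⟨h1, Or.inl h2⟩
          · exact ⟨h1, Or.inr h2⟩
      · rintro j ⟨⟨_, h1⟩, ⟨_, h2, _⟩⟩
        omega
    have s2 : (Finset.univ.filter fun j => i < j ∧ π.ε j = 1).card +
        (Finset.univ.filter fun j => i < j ∧ π.ε j = -1 ∧ π.σ i < π.σ j).card =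
        (Finset.univ.filter fun j => i < j ∧
          (π.ε j = 1 ∨ (π.ε j = -1 ∧ π.σ i < π.σ j))).card := by
      apply card_filter_add_card_filter
      · intro j
        constructor
        · rintro ⟨h1, h2 | h2⟩
          · exact Or.inl ⟨h1, h2⟩
          · exact Or.inr ⟨h1, h2⟩
        · rintro (⟨h1, h2⟩ | ⟨h1, h2⟩)
          · exact ⟨h1, Or.inl h2⟩
          · exact ⟨h1, Or.inr h2⟩
      · rintro j ⟨⟨_, h1⟩, ⟨_, h2, _⟩⟩
        omega
    have s3 : (Finset.univ.filter fun j => i < j ∧ π.ε j = -1).card +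
        (Finset.univ.filter fun j => i < j ∧ π.ε j = 1).card =
        (Finset.univ.filter fun j => i < j).card := by
      apply card_filter_add_card_filter
      · intro j
        constructor
        · intro h1
          rcases π.hε j with h | h
          · exact Or.inr ⟨h1, h⟩
          · exact Or.inl ⟨h1, h⟩
        · rintro (⟨h1, _⟩ | ⟨h1, _⟩) <;> exact h1
      · rintro j ⟨⟨_, h1⟩, ⟨_, h2⟩⟩
        omega
    have s4 : (Finset.univ.filter fun j => i < j ∧ π.ε j = 1 ∧ π.σ i < π.σ j).card +
        (Finset.univ.filter fun j => i < j ∧ π.ε j = -1 ∧ π.σ i < π.σ j).card =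
        (Finset.univ.filter fun j => i < j ∧ π.σ i < π.σ j).card := by
      apply card_filter_add_card_filter
      · intro j
        constructor
        · rintro ⟨h1, h2⟩
          rcases π.hε j with h | h
          · exact Or.inl ⟨h1, h, h2⟩
          · exact Or.inr ⟨h1, h, h2⟩
        · rintro (⟨h1, _, h2⟩ | ⟨h1, _, h2⟩) <;> exact ⟨h1, h2⟩
      · rintro j ⟨⟨_, h1, _⟩, ⟨_, h2, _⟩⟩
        omega
    have hc1 := Ai_compl π i
    have hc2 := Ai_le π i
    have hc3 := card_filter_gt i
    rw [hinv, hcard, hTp, hTm, hT0, e1, e2, if_pos hεi]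
    omega


end SignedPerm

section Mrv

def mrv : ℕ → (ℕ → ℕ) → (ℕ → ℕ) → ℕ
  | 0, _, _ => 0
  | (k+1), β, c => c 0 + β 0 * mrv k (fun j => β (j+1)) (fun j => c (j+1))

lemma mrv_lt : ∀ (k : ℕ) (β c : ℕ → ℕ), (∀ i < k, c i < β i) →
    mrv k β c < ∏ x ∈ Finset.range k, β x := by
  intro k
  induction k with
  | zero => intro β c _; simp [mrv]
  | succ k ih =>
    intro β c h
    have h0 : c 0 < β 0 := h 0 (Nat.succ_pos k)
    have hr := ih (fun j => β (j+1)) (fun j => c (j+1)) (fun i hi => h (i+1) (by omega))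
    rw [Finset.prod_range_succ']
    show c 0 + β 0 * mrv k (fun j => β (j+1)) (fun j => c (j+1)) <
      (∏ x ∈ Finset.range k, β (x+1)) * β 0
    calc c 0 + β 0 * mrv k (fun j => β (j+1)) (fun j => c (j+1))
        = β 0 * mrv k (fun j => β (j+1)) (fun j => c (j+1)) + c 0 := by ring
      _ < β 0 * mrv k (fun j => β (j+1)) (fun j => c (j+1)) + β 0 :=
          Nat.add_lt_add_left h0 _
      _ = β 0 * (mrv k (fun j => β (j+1)) (fun j => c (j+1)) + 1) := by ring
      _ ≤ β 0 * ∏ x ∈ Finset.range k, β (x+1) := Nat.mul_le_mul le_rfl (Nat.succ_le_of_lt hr)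
      _ = (∏ x ∈ Finset.range k, β (x+1)) * β 0 := by ring

lemma mrv_inj : ∀ (k : ℕ) (β c c' : ℕ → ℕ), (∀ i < k, c i < β i) → (∀ i < k, c' i < β i) →
    mrv k β c = mrv k β c' → ∀ i < k, c i = c' i := by
  intro k
  induction k with
  | zero => intro _ _ _ _ _ _ i hi; omega
  | succ k ih =>
    intro β c c' h h' heq i hi
    have h0 : c 0 < β 0 := h 0 (by omega)
    have h0' : c' 0 < β 0 := h' 0 (by omega)
    have heq' : c 0 + β 0 * mrv k (fun j => β (j+1)) (fun j => c (j+1)) =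
        c' 0 + β 0 * mrv k (fun j => β (j+1)) (fun j => c' (j+1)) := heq
    have e0 : c 0 = c' 0 := by
      have m1 : (c 0 + β 0 * mrv k (fun j => β (j+1)) (fun j => c (j+1))) % β 0 = c 0 := by
        rw [Nat.add_mul_mod_self_left, Nat.mod_eq_of_lt h0]
      have m2 : (c' 0 + β 0 * mrv k (fun j => β (j+1)) (fun j => c' (j+1))) % β 0 = c' 0 := by
        rw [Nat.add_mul_mod_self_left, Nat.mod_eq_of_lt h0']
      rw [heq'] at m1
      rw [m2] at m1
      exact m1.symm
    have eX : mrv k (fun j => β (j+1)) (fun j => c (j+1)) =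
        mrv k (fun j => β (j+1)) (fun j => c' (j+1)) := by
      have : β 0 * mrv k (fun j => β (j+1)) (fun j => c (j+1)) =
          β 0 * mrv k (fun j => β (j+1)) (fun j => c' (j+1)) := by omega
      exact Nat.eq_of_mul_eq_mul_left (by omega) this
    rcases Nat.eq_zero_or_pos i with rfl | hpos
    · exact e0
    · obtain ⟨j, rfl⟩ : ∃ j, i = j + 1 := ⟨i - 1, by omega⟩
      exact ih (fun j => β (j+1)) (fun j => c (j+1)) (fun j => c' (j+1))
        (fun x hx => h (x+1) (by omega)) (fun x hx => h' (x+1) (by omega)) eX j (by omega)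

lemma mrv_eq_sum : ∀ (k : ℕ) (β c : ℕ → ℕ),
    mrv k β c = ∑ i ∈ Finset.range k, c i * ∏ j ∈ Finset.range i, β j := by
  intro k
  induction k with
  | zero => intro β c; simp [mrv]
  | succ k ih =>
    intro β c
    rw [Finset.sum_range_succ']
    show c 0 + β 0 * mrv k (fun j => β (j+1)) (fun j => c (j+1)) = _
    rw [ih, Finset.mul_sum]
    simp only [Finset.range_zero, Finset.prod_empty, mul_one]
    rw [add_comm]
    congr 1
    apply Finset.sum_congr rfl
    intro x _
    rw [Finset.prod_range_succ']
    ring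

lemma prod_beta (k : ℕ) : ∏ j ∈ Finset.range k, (2 * j + 4) = 2 ^ k * Nat.factorial (k + 1) := by
  induction k with
  | zero => simp
  | succ k ih =>
    rw [Finset.prod_range_succ, ih, Nat.factorial_succ (k+1), pow_succ]
    ring

end Mrv

section Lehmer

variable {n : ℕ}

lemma card_filter_add_card_filter' {α : Type*} [Fintype α] [DecidableEq α] (p q r : α → Prop)
    [DecidablePred p] [DecidablePred q] [DecidablePred r]
    (h1 : ∀ j, r j ↔ p j ∨ q j) (h2 : ∀ j, ¬(p j ∧ q j)) :
    (Finset.univ.filter p).card + (Finset.univ.filter q).card =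
      (Finset.univ.filter r).card := by
  rw [← Finset.card_union_of_disjoint]
  · congr 1; ext x; simp only [Finset.mem_union, Finset.mem_filter, Finset.mem_univ,
      true_and, h1 x]
  · rw [Finset.disjoint_filter]
    intro x _ hp hq
    exact h2 x ⟨hp, hq⟩

lemma rank_lemma (σ : Equiv.Perm (Fin n)) (i : Fin n) :
    (Finset.univ.filter fun j => i < j ∧ σ j < σ i).card +
      (Finset.univ.filter fun j => j < i ∧ σ j < σ i).card = (σ i).val := by
  have himg : (Finset.univ.filter fun j => σ j < σ i).card = (σ i).val := by
    rw [← Fin.card_Iio (σ i)]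
    apply Finset.card_bij (fun j _ => σ j)
    · intro a ha
      simp only [Finset.mem_filter, Finset.mem_univ, true_and] at ha
      simp [Finset.mem_Iio, ha]
    · intro a _ b _ hab
      exact σ.injective hab
    · intro b hb
      simp only [Finset.mem_Iio] at hb
      exact ⟨σ.symm b, by simp [hb], by simp⟩
  rw [← himg]
  apply card_filter_add_card_filter'
  · intro j
    constructor
    · intro hj
      rcases lt_trichotomy i j with h | h | h
      · exact Or.inl ⟨h, hj⟩
      · subst h; exact absurd hj (lt_irrefl _)
      · exact Or.inr ⟨h, hj⟩
    · rintro (⟨_, hj⟩ | ⟨_, hj⟩) <;> exact hj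
  · rintro j ⟨⟨h1, _⟩, ⟨h2, _⟩⟩
    exact lt_asymm h1 h2

lemma lehmer_step (E : Finset (Fin n)) {v w : Fin n} (hv : v ∉ E) (hlt : v < w) :
    v.val - (E.filter fun x => x < v).card < w.val - (E.filter fun x => x < w).card := by
  have hvw : v.val < w.val := hlt
  have hsub : (E.filter fun x => x < w).card ≤
      (E.filter fun x => x < v).card + (w.val - v.val - 1) := by
    have split : (E.filter fun x => x < w) ⊆
        (E.filter fun x => x < v) ∪ (E.filter fun x => v < x ∧ x < w) := by
      intro x hx
      simp only [Finset.mem_filter, Finset.mem_union] at hx ⊢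
      rcases lt_trichotomy x v with h | h | h
      · exact Or.inl ⟨hx.1, h⟩
      · subst h; exact absurd hx.1 hv
      · exact Or.inr ⟨hx.1, h, hx.2⟩
    have hIoo : (E.filter fun x => v < x ∧ x < w).card ≤ w.val - v.val - 1 := by
      rw [← Fin.card_Ioo]
      apply Finset.card_le_card
      intro x hx
      simp only [Finset.mem_filter] at hx
      simp [Finset.mem_Ioo, hx.2.1, hx.2.2]
    calc (E.filter fun x => x < w).card ≤
        ((E.filter fun x => x < v) ∪ (E.filter fun x => v < x ∧ x < w)).card :=
          Finset.card_le_card split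
      _ ≤ (E.filter fun x => x < v).card + (E.filter fun x => v < x ∧ x < w).card :=
          Finset.card_union_le _ _
      _ ≤ (E.filter fun x => x < v).card + (w.val - v.val - 1) := by omega
  have hb : (E.filter fun x => x < v).card ≤ v.val := by
    rw [← Fin.card_Iio v]
    apply Finset.card_le_card
    intro x hx
    simp only [Finset.mem_filter] at hx
    simp [Finset.mem_Iio, hx.2]
  omega

lemma lehmer_inj (σ τ : Equiv.Perm (Fin n))
    (h : ∀ i : Fin n, (Finset.univ.filter fun j => i < j ∧ σ j < σ i).card =
        (Finset.univ.filter fun j => i < j ∧ τ j < τ i).card) : σ = τ := by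
  classical
  have key : ∀ k : ℕ, ∀ i : Fin n, i.val < k → σ i = τ i := by
    intro k
    induction k with
    | zero => intro i hi; omega
    | succ k ih =>
      intro i hi
      rcases Nat.lt_or_ge i.val k with hik | hik
      · exact ih i hik
      · have hik : i.val = k := by omega
        have hprev : ∀ j : Fin n, j < i → σ j = τ j := fun j hj =>
          ih j (by have : j.val < i.val := hj; omega)
        set E : Finset (Fin n) := (Finset.univ.filter fun j => j < i).image σ with hE
        have hEτ : E = (Finset.univ.filter fun j => j < i).image τ := by
          apply Finset.image_congr
          intro j hj
          simp only [Finset.coe_filter, Set.mem_setOf_eq] at hj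
          exact hprev j hj.2
        have hσE : σ i ∉ E := by
          simp only [hE, Finset.mem_image, Finset.mem_filter, Finset.mem_univ, true_and]
          rintro ⟨j, hj, hjeq⟩
          exact absurd (σ.injective hjeq) (ne_of_lt hj)
        have hτE : τ i ∉ E := by
          rw [hEτ]
          simp only [Finset.mem_image, Finset.mem_filter, Finset.mem_univ, true_and]
          rintro ⟨j, hj, hjeq⟩
          exact absurd (τ.injective hjeq) (ne_of_lt hj)
        have cntσ : (E.filter fun x => x < σ i).card =
            (Finset.univ.filter fun j => j < i ∧ σ j < σ i).card := by
          rw [hE, Finset.filter_image, Finset.filter_filter]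
          exact Finset.card_image_of_injOn (fun a _ b _ hab => σ.injective hab)
        have cntτ : (E.filter fun x => x < τ i).card =
            (Finset.univ.filter fun j => j < i ∧ τ j < τ i).card := by
          rw [hEτ, Finset.filter_image, Finset.filter_filter]
          exact Finset.card_image_of_injOn (fun a _ b _ hab => τ.injective hab)
        have rσ := rank_lemma σ i
        have rτ := rank_lemma τ i
        have hGi : (σ i).val - (E.filter fun x => x < σ i).card =
            (τ i).val - (E.filter fun x => x < τ i).card := by
          rw [cntσ, cntτ]
          have := h i
          omega
        rcases lt_trichotomy (σ i) (τ i) with hlt | heq2 | hlt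
        · exact absurd hGi (ne_of_lt (lehmer_step E hσE hlt))
        · exact heq2
        · exact absurd hGi.symm (ne_of_lt (lehmer_step E hτE hlt))
  exact Equiv.ext fun i => key n i i.isLt

end Lehmer


section Parity

variable {n : ℕ}

lemma pow_split (n : ℕ) (hn : 1 ≤ n) : 2 ^ n = 2 * 2 ^ (n - 1) := by
  have h1 : n - 1 + 1 = n := by omega
  nth_rewrite 1 [← h1]
  rw [pow_succ]
  ring

lemma card_filter_update (z : Fin n) (b : Fin n → Bool) :
    (Finset.univ.filter fun i => Function.update b z (!b z) i = true) =
      if b z then (Finset.univ.filter fun i => b i = true).erase z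
      else insert z (Finset.univ.filter fun i => b i = true) := by
  ext i
  by_cases hiz : i = z
  · subst hiz
    cases hbz : b i <;>
      simp [Function.update_self, hbz]
  · simp only [Finset.mem_filter, Finset.mem_univ, true_and, Function.update_of_ne hiz]
    split_ifs <;> simp [Finset.mem_erase, Finset.mem_insert, hiz]

lemma parity_flip (z : Fin n) (b : Fin n → Bool) :
    Even ((Finset.univ.filter fun i => Function.update b z (!b z) i = true).card) ↔
      ¬ Even ((Finset.univ.filter fun i => b i = true).card) := by
  rw [card_filter_update]
  by_cases hbz : b z
  · rw [if_pos hbz]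
    have hz : z ∈ Finset.univ.filter fun i => b i = true := by simp [hbz]
    have hc : 1 ≤ (Finset.univ.filter fun i => b i = true).card :=
      Finset.card_pos.mpr ⟨z, hz⟩
    rw [Finset.card_erase_of_mem hz, Nat.even_iff, Nat.even_iff]
    omega
  · rw [if_neg hbz]
    have hz : z ∉ Finset.univ.filter fun i => b i = true := by simp [hbz]
    rw [Finset.card_insert_of_notMem hz, Nat.even_iff, Nat.even_iff]
    omega

lemma card_even_bool (n : ℕ) (hn : 1 ≤ n) :
    (Finset.univ.filter fun b : Fin n → Bool =>
      Even (Finset.univ.filter fun i => b i = true).card).card = 2 ^ (n - 1) := by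
  classical
  have hz : 0 < n := hn
  have z : Fin n := ⟨0, hz⟩
  have hbij : (Finset.univ.filter fun b : Fin n → Bool =>
      Even (Finset.univ.filter fun i => b i = true).card).card =
      (Finset.univ.filter fun b : Fin n → Bool =>
        ¬ Even (Finset.univ.filter fun i => b i = true).card).card := by
    refine Finset.card_bij' (fun b _ => Function.update b z (!b z))
      (fun b _ => Function.update b z (!b z)) ?_ ?_ ?_ ?_
    · intro b hb
      simp only [Finset.mem_filter, Finset.mem_univ, true_and] at hb ⊢
      rw [parity_flip]
      simpa using hb
    · intro b hb
      simp only [Finset.mem_filter, Finset.mem_univ, true_and] at hb ⊢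
      rw [parity_flip]
      exact hb
    · intro b _
      funext i
      by_cases hiz : i = z
      · subst hiz; simp [Function.update_self]
      · simp [Function.update_of_ne hiz]
    · intro b _
      funext i
      by_cases hiz : i = z
      · subst hiz; simp [Function.update_self]
      · simp [Function.update_of_ne hiz]
  have htot : (Finset.univ.filter fun b : Fin n → Bool =>
        Even (Finset.univ.filter fun i => b i = true).card).card +
      (Finset.univ.filter fun b : Fin n → Bool =>
        ¬ Even (Finset.univ.filter fun i => b i = true).card).card =
      (Finset.univ : Finset (Fin n → Bool)).card :=
    Finset.card_filter_add_card_filter_not _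
  have hcard : (Finset.univ : Finset (Fin n → Bool)).card = 2 ^ n := by
    simp [Finset.card_univ]
  have hpow := pow_split n hn
  rw [← hbij, hcard, hpow] at htot
  refine Nat.eq_of_mul_eq_mul_left ?_ (by rw [two_mul]; exact htot)
  norm_num


end Parity

namespace SignedPerm

variable {n : ℕ}

lemma ext' {π ρ : SignedPerm n} (h1 : π.σ = ρ.σ) (h2 : π.ε = ρ.ε) : π = ρ := by
  cases π; cases ρ; cases h1; cases h2; rfl

noncomputable def dig (hn : 2 ≤ n) (π : SignedPerm n) (k : ℕ) : ℕ :=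
  invi ⟨n - 2 - k, by omega⟩ π

lemma invi_le (π : SignedPerm n) (i : Fin n) :
    invi i π ≤ 2 * (n - 1 - i.val) + 1 := by
  rw [invi_eq]
  have := Ai_le π i
  split_ifs <;> omega

lemma dig_lt (hn : 2 ≤ n) (π : SignedPerm n) (k : ℕ) (hk : k < n - 1) :
    dig hn π k < 2 * k + 4 := by
  have h1 : invi (⟨n - 2 - k, by omega⟩ : Fin n) π ≤ 2 * (n - 1 - (n - 2 - k)) + 1 :=
    invi_le π _
  have h2 : n - 1 - (n - 2 - k) = k + 1 := by omega
  show invi (⟨n - 2 - k, by omega⟩ : Fin n) π < 2 * k + 4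
  omega

lemma sum_eq_mrv (hn : 2 ≤ n) (π : SignedPerm n) :
    (∑ i ∈ Finset.univ.filter (fun i : Fin n => i.val + 1 ≤ n - 1),
        invi i π * (2 ^ (n - 2 - i.val) * Nat.factorial (n - 1 - i.val))) =
      mrv (n - 1) (fun k => 2 * k + 4) (dig hn π) := by
  have hstep1 : (∑ i ∈ Finset.univ.filter (fun i : Fin n => i.val + 1 ≤ n - 1),
        invi i π * (2 ^ (n - 2 - i.val) * Nat.factorial (n - 1 - i.val))) =
      ∑ j ∈ Finset.range n, (fun j => if h : j < n then
        (if j + 1 ≤ n - 1 then invi ⟨j, h⟩ π * (2 ^ (n - 2 - j) * Nat.factorial (n - 1 - j))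
          else 0) else 0) j := by
    rw [← Fin.sum_univ_eq_sum_range, Finset.sum_filter]
    apply Finset.sum_congr rfl
    intro i _
    rw [dif_pos i.isLt]
  rw [hstep1]
  have hr : Finset.range n = Finset.range ((n - 1) + 1) := by congr 1; omega
  rw [hr, Finset.sum_range_succ, dif_pos (by omega : n - 1 < n),
    if_neg (by omega : ¬(n - 1 + 1 ≤ n - 1)), add_zero]
  have hstep2 : ∑ j ∈ Finset.range (n - 1), (fun j => if h : j < n then
      (if j + 1 ≤ n - 1 then invi ⟨j, h⟩ π * (2 ^ (n - 2 - j) * Nat.factorial (n - 1 - j))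
        else 0) else 0) j =
      ∑ j ∈ Finset.range (n - 1),
        dig hn π (n - 2 - j) * (2 ^ (n - 2 - j) * Nat.factorial (n - 1 - j)) := by
    apply Finset.sum_congr rfl
    intro j hj
    rw [Finset.mem_range] at hj
    beta_reduce
    rw [dif_pos (by omega : j < n), if_pos (by omega)]
    have hd : dig hn π (n - 2 - j) = invi ⟨j, by omega⟩ π := by
      show invi (⟨n - 2 - (n - 2 - j), by omega⟩ : Fin n) π = invi (⟨j, by omega⟩ : Fin n) π
      congr 1
      exact Fin.ext (by simp; omega)
    rw [hd]
  rw [hstep2]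
  have hstep3 : ∑ j ∈ Finset.range (n - 1),
      dig hn π (n - 2 - j) * (2 ^ (n - 2 - j) * Nat.factorial (n - 1 - j)) =
      ∑ k ∈ Finset.range (n - 1), dig hn π k * (2 ^ k * Nat.factorial (k + 1)) := by
    rw [← Finset.sum_range_reflect (fun k => dig hn π k * (2 ^ k * Nat.factorial (k + 1)))]
    apply Finset.sum_congr rfl
    intro j hj
    rw [Finset.mem_range] at hj
    have h1 : n - 1 - 1 - j = n - 2 - j := by omega
    have h2 : n - 2 - j + 1 = n - 1 - j := by omega
    rw [h1, h2]
  rw [hstep3, mrv_eq_sum]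
  apply Finset.sum_congr rfl
  intro k _
  rw [prod_beta]

lemma recover (hn : 2 ≤ n) (π ρ : SignedPerm n) (i : Fin n) (hi : i.val ≤ n - 2)
    (h : invi i π = invi i ρ) : π.ε i = ρ.ε i ∧ Ai π i = Ai ρ i := by
  have hM : 1 ≤ n - 1 - i.val := by omega
  have h1 := invi_eq π i
  have h2 := invi_eq ρ i
  have b1 := Ai_le π i
  have b2 := Ai_le ρ i
  rcases π.hε i with e1 | e1 <;> rcases ρ.hε i with e2 | e2
  · rw [if_pos e1] at h1
    rw [if_pos e2] at h2
    exact ⟨e1.trans e2.symm, by omega⟩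
  · rw [if_pos e1] at h1
    rw [if_neg (by rw [e2]; decide)] at h2
    omega
  · rw [if_neg (by rw [e1]; decide)] at h1
    rw [if_pos e2] at h2
    omega
  · rw [if_neg (by rw [e1]; decide)] at h1
    rw [if_neg (by rw [e2]; decide)] at h2
    exact ⟨e1.trans e2.symm, by omega⟩

def toPair (π : SignedPerm n) : Equiv.Perm (Fin n) × (Fin n → Bool) :=
  (π.σ, fun i => decide (π.ε i = -1))

lemma toPair_inj : Function.Injective (toPair (n := n)) := by
  intro π ρ h
  apply ext' (congrArg Prod.fst h)
  funext i
  have h2 := congrFun (congrArg Prod.snd h) i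
  simp only [toPair] at h2
  rcases π.hε i with p1 | p1 <;> rcases ρ.hε i with p2 | p2 <;> simp_all

lemma image_toPair :
    toPair '' {π : SignedPerm n | Even (Finset.univ.filter fun i : Fin n => π.ε i = -1).card} =
      {p : Equiv.Perm (Fin n) × (Fin n → Bool) |
        Even (Finset.univ.filter fun i => p.2 i = true).card} := by
  ext p
  constructor
  · rintro ⟨π, hπ, rfl⟩
    simp only [Set.mem_setOf_eq] at hπ ⊢
    have he : (Finset.univ.filter fun i => (toPair π).2 i = true) =
        (Finset.univ.filter fun i => π.ε i = -1) := by
      apply Finset.filter_congr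
      intro i _
      simp [toPair]
    rw [he]
    exact hπ
  · intro hp
    obtain ⟨σp, b⟩ := p
    simp only [Set.mem_setOf_eq] at hp
    refine ⟨⟨σp, fun i => if b i then -1 else 1, fun i => by cases hbi : b i <;> simp [hbi]⟩, ?_, ?_⟩
    · simp only [Set.mem_setOf_eq]
      have he : (Finset.univ.filter fun i => (if b i then (-1 : ℤ) else 1) = -1) =
          (Finset.univ.filter fun i => b i = true) := by
        apply Finset.filter_congr
        intro i _
        cases hbi : b i <;> simp [hbi]
      rw [he]
      exact hp
    · simp only [toPair, Prod.mk.injEq]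
      constructor
      · trivial
      · funext i
        by_cases hbi : b i = true <;> simp [hbi]

lemma domain_ncard (hn : 2 ≤ n) :
    ({π : SignedPerm n |
        Even (Finset.univ.filter fun i : Fin n => π.ε i = -1).card}).ncard =
      2 ^ (n - 1) * Nat.factorial n := by
  classical
  rw [← Set.ncard_image_of_injective _ toPair_inj, image_toPair]
  have hc : {p : Equiv.Perm (Fin n) × (Fin n → Bool) |
      Even (Finset.univ.filter fun i => p.2 i = true).card} =
      ↑(Finset.univ.filter fun p : Equiv.Perm (Fin n) × (Fin n → Bool) =>
        Even (Finset.univ.filter fun i => p.2 i = true).card) := by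
    ext p
    simp
  rw [hc, Set.ncard_coe_finset]
  have hprod : (Finset.univ.filter fun p : Equiv.Perm (Fin n) × (Fin n → Bool) =>
      Even (Finset.univ.filter fun i => p.2 i = true).card) =
      (Finset.univ : Finset (Equiv.Perm (Fin n))) ×ˢ
        (Finset.univ.filter fun b : Fin n → Bool =>
          Even (Finset.univ.filter fun i => b i = true).card) := by
    ext ⟨a, b⟩
    simp [Finset.mem_product]
  rw [hprod, Finset.card_product, Finset.card_univ, Fintype.card_perm, Fintype.card_fin,
    card_even_bool n (by omega)]
  ring

end SignedPerm

open SignedPerm in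
/-- With `Dᵢ = 2^(i-1) · i!`, the map
`dₙ(π) = ∑_{i=1}^{n-1} invᵢ(π) · D_{n-i}` is a bijection from the even signed
permutation group `Dₙ ⊆ Bₙ` (an even number of negative signs) onto
`{0, 1, …, 2^(n-1)·n! - 1}` (position `i ∈ [n]` is `i.val + 1` in 1-based
indexing, so `n - i = n - 1 - i.val` and `(n - i) - 1 = n - 2 - i.val`). -/
theorem d_bijective (n : ℕ) (hn : 2 ≤ n) :
    Set.BijOn
      (fun π : SignedPerm n =>
        ∑ i ∈ Finset.univ.filter (fun i : Fin n => i.val + 1 ≤ n - 1),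
          invi i π * (2 ^ (n - 2 - i.val) * Nat.factorial (n - 1 - i.val)))
      {π : SignedPerm n | Even (Finset.univ.filter fun i : Fin n => π.ε i = -1).card}
      {m : ℕ | m < 2 ^ (n - 1) * Nat.factorial n} := by
  classical
  have Nval : 0 < 2 ^ (n - 1) * Nat.factorial n := by positivity
  have htset : {m : ℕ | m < 2 ^ (n - 1) * Nat.factorial n} =
      ↑(Finset.range (2 ^ (n - 1) * Nat.factorial n)) := by
    ext m
    simp
  have htfin : ({m : ℕ | m < 2 ^ (n - 1) * Nat.factorial n}).Finite := by
    rw [htset]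
    exact (Finset.range _).finite_toSet
  have htcard : ({m : ℕ | m < 2 ^ (n - 1) * Nat.factorial n}).ncard =
      2 ^ (n - 1) * Nat.factorial n := by
    rw [htset, Set.ncard_coe_finset, Finset.card_range]
  have hmaps : ∀ π : SignedPerm n,
      (∑ i ∈ Finset.univ.filter (fun i : Fin n => i.val + 1 ≤ n - 1),
        invi i π * (2 ^ (n - 2 - i.val) * Nat.factorial (n - 1 - i.val))) <
        2 ^ (n - 1) * Nat.factorial n := by
    intro π
    rw [sum_eq_mrv hn π]
    calc mrv (n - 1) (fun k => 2 * k + 4) (dig hn π)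
        < ∏ k ∈ Finset.range (n - 1), (2 * k + 4) :=
          mrv_lt _ _ _ (fun k hk => dig_lt hn π k hk)
      _ = 2 ^ (n - 1) * Nat.factorial ((n - 1) + 1) := prod_beta (n - 1)
      _ = 2 ^ (n - 1) * Nat.factorial n := by rw [show n - 1 + 1 = n by omega]
  have hinj : Set.InjOn
      (fun π : SignedPerm n =>
        ∑ i ∈ Finset.univ.filter (fun i : Fin n => i.val + 1 ≤ n - 1),
          invi i π * (2 ^ (n - 2 - i.val) * Nat.factorial (n - 1 - i.val)))
      {π : SignedPerm n | Even (Finset.univ.filter fun i : Fin n => π.ε i = -1).card} := by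
    intro π hπ ρ hρ heq
    simp only at heq
    rw [sum_eq_mrv hn π, sum_eq_mrv hn ρ] at heq
    have hdig := mrv_inj (n - 1) _ _ _ (fun k hk => dig_lt hn π k hk)
      (fun k hk => dig_lt hn ρ k hk) heq
    have hinvi : ∀ i : Fin n, i.val ≤ n - 2 → invi i π = invi i ρ := by
      intro i hi
      have h := hdig (n - 2 - i.val) (by omega)
      have h2 : invi (⟨n - 2 - (n - 2 - i.val), by omega⟩ : Fin n) π =
          invi (⟨n - 2 - (n - 2 - i.val), by omega⟩ : Fin n) ρ := h
      have hfin : (⟨n - 2 - (n - 2 - i.val), by omega⟩ : Fin n) = i :=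
        Fin.ext (by simp; omega)
      rwa [hfin] at h2
    have hεeq : ∀ i : Fin n, i.val ≤ n - 2 → π.ε i = ρ.ε i :=
      fun i hi => (recover hn π ρ i hi (hinvi i hi)).1
    have hAi : ∀ i : Fin n,
        (Finset.univ.filter fun j => i < j ∧ π.σ j < π.σ i).card =
          (Finset.univ.filter fun j => i < j ∧ ρ.σ j < ρ.σ i).card := by
      intro i
      by_cases hi : i.val ≤ n - 2
      · exact (recover hn π ρ i hi (hinvi i hi)).2
      · have hival : i.val = n - 1 := by have := i.isLt; omega
        have hemp : ∀ σ' : Equiv.Perm (Fin n),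
            (Finset.univ.filter fun j => i < j ∧ σ' j < σ' i) = ∅ := by
          intro σ'
          apply Finset.filter_eq_empty_iff.mpr
          rintro j _ ⟨hij, -⟩
          have h1 : i.val < j.val := hij
          have := j.isLt
          omega
        rw [hemp π.σ, hemp ρ.σ]
    have hσ : π.σ = ρ.σ := lehmer_inj π.σ ρ.σ hAi
    have hε : π.ε = ρ.ε := by
      funext i
      by_cases hi : i.val ≤ n - 2
      · exact hεeq i hi
      · have hival : i.val = n - 1 := by have := i.isLt; omega
        have hsplit : ∀ ε : Fin n → ℤ,
            (Finset.univ.filter fun j => ε j = -1).card =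
              ((Finset.univ.erase i).filter fun j => ε j = -1).card +
                (if ε i = -1 then 1 else 0) := by
          intro ε
          conv_lhs => rw [← Finset.insert_erase (Finset.mem_univ i)]
          rw [Finset.filter_insert]
          split_ifs with hc
          · rw [Finset.card_insert_of_notMem
              (fun hmem => Finset.notMem_erase i _ (Finset.mem_of_mem_filter _ hmem))]
          · omega
        have herase : ((Finset.univ.erase i).filter fun j => π.ε j = -1).card =
            ((Finset.univ.erase i).filter fun j => ρ.ε j = -1).card := by
          congr 1
          apply Finset.filter_congr
          intro j hj
          have hjne : j ≠ i := Finset.ne_of_mem_erase hj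
          have hjv : j.val ≤ n - 2 := by
            have h1 := j.isLt
            have h2 : j.val ≠ n - 1 := fun hc => hjne (Fin.ext (by omega))
            omega
          rw [hεeq j hjv]
        have hπd : Even (Finset.univ.filter fun j => π.ε j = -1).card := hπ
        have hρd : Even (Finset.univ.filter fun j => ρ.ε j = -1).card := hρ
        rw [hsplit π.ε] at hπd
        rw [hsplit ρ.ε] at hρd
        rw [herase] at hπd
        rw [Nat.even_iff] at hπd hρd
        rcases π.hε i with p1 | p1 <;> rcases ρ.hε i with p2 | p2
        · rw [p1, p2]
        · rw [if_neg (by rw [p1]; decide)] at hπd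
          rw [if_pos p2] at hρd
          omega
        · rw [if_pos p1] at hπd
          rw [if_neg (by rw [p2]; decide)] at hρd
          omega
        · rw [p1, p2]
    exact ext' hσ hε
  refine ⟨?_, hinj, ?_⟩
  · intro π _
    simp only [Set.mem_setOf_eq]
    exact hmaps π
  · have himg : (fun π : SignedPerm n =>
        ∑ i ∈ Finset.univ.filter (fun i : Fin n => i.val + 1 ≤ n - 1),
          invi i π * (2 ^ (n - 2 - i.val) * Nat.factorial (n - 1 - i.val))) ''
        {π : SignedPerm n | Even (Finset.univ.filter fun i : Fin n => π.ε i = -1).card} =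
        {m : ℕ | m < 2 ^ (n - 1) * Nat.factorial n} := by
      apply Set.eq_of_subset_of_ncard_le
      · rintro m ⟨π, _, rfl⟩
        exact hmaps π
      · rw [Set.ncard_image_of_injOn hinj, domain_ncard hn, htcard]
      · exact htfin
    exact himg.superset
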